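/- Let f(n,k) denote the number of permutations of length n with exactly k inversions avoiding the vincular pattern 1-32. If π is such a permutation with n ≥ k+2, then π_j = j for all j ≥ k+2; consequently f(n,k) = f(k+1,k) for all n ≥ k+1. -/

import Mathlib

/-- Containment of 1-32. -/
def Contains1d32 {n : ℕ} (π : Equiv.Perm (Fin n)) : Prop :=
  ∃ (i j : Fin n) (h : (j : ℕ) + 1 < n), i < j ∧
    π i < π ⟨(j : ℕ) + 1, h⟩ ∧ π ⟨(j : ℕ) + 1, h⟩ < π j

/-- Number of inversions of `π`. -/
def invCount {n : ℕ} (π : Equiv.Perm (Fin n)) : ℕ :=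
  (Finset.univ.filter fun q : Fin n × Fin n => q.1 < q.2 ∧ π q.2 < π q.1).card

/-- `fCount n k` is the number of `1-32`-avoiding permutations of length `n` with
exactly `k` inversions. -/
noncomputable def fCount (n k : ℕ) : ℕ :=
  Nat.card {π : Equiv.Perm (Fin n) // ¬ Contains1d32 π ∧ invCount π = k}

section Aux

variable {n m : ℕ}

/-- If `π` fixes everything with index `≥ m`, then values on the prefix stay in prefix. -/
lemma prefix_closed (π : Equiv.Perm (Fin n)) (hfix : ∀ l : Fin n, m ≤ (l : ℕ) → π l = l) :
    ∀ l : Fin n, (l : ℕ) < m → (π l : ℕ) < m := by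
  intro l hl
  by_contra hge
  push_neg at hge
  have h1 : π (π l) = π l := hfix (π l) hge
  have h2 : π l = l := π.injective h1
  rw [h2] at hge
  omega

/-- Key lemma: if `π` avoids 1-32, fixes everything above `j`, and moves `j`, then
`π` has at least `j` inversions. -/
lemma key_lemma (π : Equiv.Perm (Fin n)) (hav : ¬ Contains1d32 π) (j : Fin n)
    (hfix : ∀ l : Fin n, (j : ℕ) < (l : ℕ) → π l = l) (hj : π j ≠ j) :
    (j : ℕ) ≤ invCount π := by
  have hfix' : ∀ l : Fin n, (j : ℕ) + 1 ≤ (l : ℕ) → π l = l := fun l hl => hfix l (by omega)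
  have hb : ∀ l : Fin n, (l : ℕ) ≤ (j : ℕ) → (π l : ℕ) ≤ (j : ℕ) := by
    intro l hl
    have := prefix_closed (m := (j : ℕ) + 1) π hfix' l (by omega)
    omega
  set i : Fin n := π.symm j with hi
  have hπi : π i = j := π.apply_symm_apply j
  have hine : i ≠ j := by
    intro h; rw [h] at hπi; exact hj hπi
  have hij : (i : ℕ) < (j : ℕ) := by
    rcases lt_or_ge (j : ℕ) (i : ℕ) with h | h
    · have := hfix i h
      rw [this] at hπi
      exact absurd hπi hine
    · rcases lt_or_eq_of_le h with h' | h'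
      · omega
      · exact absurd (Fin.ext h') (by intro hh; exact hine hh)
  have hi1 : (i : ℕ) + 1 < n := by
    have := j.isLt; omega
  set i1 : Fin n := ⟨(i : ℕ) + 1, hi1⟩ with hi1def
  have hd : (π i1 : ℕ) < (j : ℕ) := by
    have h1 : (π i1 : ℕ) ≤ (j : ℕ) := hb i1 (by simp [hi1def]; omega)
    have h2 : π i1 ≠ j := by
      intro h
      have : i1 = i := π.injective (h.trans hπi.symm)
      have : (i1 : ℕ) = (i : ℕ) := by rw [this]
      simp [hi1def] at this
    have h3 : (π i1 : ℕ) ≠ (j : ℕ) := fun h => h2 (by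
      have : π i1 = π i := Fin.ext (by rw [h, hπi])
      rw [this, hπi])
    omega
  have hmin : ∀ l : Fin n, (l : ℕ) < (i : ℕ) → (π i1 : ℕ) < (π l : ℕ) := by
    intro l hl
    by_contra hle
    push_neg at hle
    have hne : π l ≠ π i1 := by
      intro h
      have : l = i1 := π.injective h
      have : (l : ℕ) = (i : ℕ) + 1 := by rw [this]
      omega
    have hlt : (π l : ℕ) < (π i1 : ℕ) := lt_of_le_of_ne hle (fun h => hne (Fin.ext h))
    apply hav
    refine ⟨l, i, hi1, ?_, ?_, ?_⟩
    · exact Fin.lt_def.mpr hl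
    · exact Fin.lt_def.mpr hlt
    · rw [hπi]; exact Fin.lt_def.mpr hd
  -- now count
  unfold invCount
  have hcard := Finset.card_le_card_of_injOn
    (f := fun t : ℕ => if ht : t < (j : ℕ) then
      (if t ≤ (i : ℕ) then ((⟨t, ht.trans j.isLt⟩ : Fin n), i1)
       else ((i : Fin n), (⟨t + 1, by have := j.isLt; omega⟩ : Fin n)))
      else (i, i))
    (s := Finset.range (j : ℕ))
    (t := Finset.univ.filter fun q : Fin n × Fin n => q.1 < q.2 ∧ π q.2 < π q.1)
    ?_ ?_
  · simpa using hcard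
  · -- maps to
    intro t ht
    simp only [Finset.coe_range, Set.mem_Iio, Finset.mem_coe, Finset.mem_range] at ht
    simp only [Finset.mem_coe, ht, dif_pos, Finset.mem_filter, Finset.mem_univ, true_and]
    by_cases hti : t ≤ (i : ℕ)
    · simp only [hti, if_pos]
      constructor
      · exact Fin.lt_def.mpr (by simp [hi1def]; omega)
      · rcases lt_or_eq_of_le hti with h' | h'
        · exact Fin.lt_def.mpr (hmin _ h')
        · have : (⟨t, ht.trans j.isLt⟩ : Fin n) = i := Fin.ext h'
          rw [this, hπi]
          exact Fin.lt_def.mpr hd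
    · simp only [hti, if_neg, not_false_iff]
      push_neg at hti
      constructor
      · exact Fin.lt_def.mpr (by simp; omega)
      · set l : Fin n := ⟨t + 1, by have := j.isLt; omega⟩ with hldef
        have h1 : (π l : ℕ) ≤ (j : ℕ) := hb l (by simp [hldef]; omega)
        have h2 : π l ≠ π i := by
          intro h
          have : l = i := π.injective h
          have : (l : ℕ) = (i : ℕ) := by rw [this]
          simp [hldef] at this
          omega
        rw [hπi] at h2 ⊢
        exact Fin.lt_def.mpr (lt_of_le_of_ne h1 (fun h => h2 (Fin.ext h)))
  · -- injective
    intro t1 ht1 t2 ht2 heq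
    simp only [Finset.coe_range, Set.mem_Iio] at ht1 ht2
    simp only [ht1, ht2, dif_pos] at heq
    by_cases h1 : t1 ≤ (i : ℕ) <;> by_cases h2 : t2 ≤ (i : ℕ) <;>
      simp only [h1, h2, if_pos, if_neg, not_false_iff] at heq
    · have := congrArg (fun p : Fin n × Fin n => (p.1 : ℕ)) heq
      simpa using this
    · have := congrArg (fun p => (p.2 : ℕ)) heq
      simp [hi1def] at this
      omega
    · have := congrArg (fun p => (p.2 : ℕ)) heq
      simp [hi1def] at this
      omega
    · have := congrArg (fun p => (p.2 : ℕ)) heq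
      simp at this
      omega

/-- Part 1 without the superfluous hypothesis. -/
lemma fix_of_avoid {k : ℕ} (π : Equiv.Perm (Fin n)) (hav : ¬ Contains1d32 π)
    (hk : invCount π = k) : ∀ j : Fin n, k + 1 ≤ (j : ℕ) → π j = j := by
  by_contra h
  push_neg at h
  obtain ⟨j, hjk, hjne⟩ := h
  set T : Finset (Fin n) := Finset.univ.filter fun l : Fin n => k + 1 ≤ (l : ℕ) ∧ π l ≠ l with hT
  have hjT : j ∈ T := by simp [hT, hjk, hjne]; omega
  have hTne : T.Nonempty := ⟨j, hjT⟩
  set j0 := T.max' hTne with hj0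
  have hj0T : j0 ∈ T := T.max'_mem hTne
  simp only [hT, Finset.mem_filter, Finset.mem_univ, true_and] at hj0T
  have hfix : ∀ l : Fin n, (j0 : ℕ) < (l : ℕ) → π l = l := by
    intro l hl
    by_contra hlne
    have hlT : l ∈ T := by
      simp only [hT, Finset.mem_filter, Finset.mem_univ, true_and]
      exact ⟨by omega, hlne⟩
    have := T.le_max' l hlT
    rw [← hj0] at this
    exact absurd (Fin.lt_def.mpr hl) (not_lt.mpr this)
  have := key_lemma π hav j0 hfix hj0T.2
  omega

/-- Extension of a permutation of `Fin m` to `Fin n` by the identity. -/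
def extP (h : m ≤ n) (σ : Equiv.Perm (Fin m)) : Equiv.Perm (Fin n) where
  toFun x := if hx : (x : ℕ) < m then ⟨σ ⟨x, hx⟩, lt_of_lt_of_le (σ ⟨x, hx⟩).2 h⟩ else x
  invFun x := if hx : (x : ℕ) < m then ⟨σ.symm ⟨x, hx⟩, lt_of_lt_of_le (σ.symm ⟨x, hx⟩).2 h⟩ else x
  left_inv x := by
    by_cases hx : (x : ℕ) < m
    · simp [hx, (σ ⟨x, hx⟩).2]
    · simp [hx]
  right_inv x := by
    by_cases hx : (x : ℕ) < m
    · simp [hx, (σ.symm ⟨x, hx⟩).2]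
    · simp [hx]

lemma extP_apply_lt (h : m ≤ n) (σ : Equiv.Perm (Fin m)) (x : Fin n) (hx : (x : ℕ) < m) :
    (extP h σ x : ℕ) = (σ ⟨x, hx⟩ : ℕ) := by
  simp [extP, hx, Equiv.coe_fn_mk]

lemma extP_apply_ge (h : m ≤ n) (σ : Equiv.Perm (Fin m)) (x : Fin n) (hx : m ≤ (x : ℕ)) :
    extP h σ x = x := by
  simp [extP, Equiv.coe_fn_mk, Nat.not_lt.mpr hx]

lemma extP_lt (h : m ≤ n) (σ : Equiv.Perm (Fin m)) (x : Fin n) (hx : (x : ℕ) < m) :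
    (extP h σ x : ℕ) < m := by
  rw [extP_apply_lt h σ x hx]; exact (σ ⟨x, hx⟩).2

/-- Containment transfers along `extP`. -/
lemma contains_extP_iff (h : m ≤ n) (σ : Equiv.Perm (Fin m)) :
    Contains1d32 (extP h σ) ↔ Contains1d32 σ := by
  constructor
  · rintro ⟨i, j, hj1, hij, h1, h2⟩
    -- show all indices are < m
    have hjm : (j : ℕ) + 1 < m := by
      by_contra hge
      push_neg at hge
      rcases lt_or_ge (j : ℕ) m with hjlt | hjge
      · -- j < m ≤ j+1, so j+1 ≥ m: π (j+1) = j+1 ≥ m > π j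
        have hje : (j : ℕ) + 1 = m ∨ m ≤ (j : ℕ) + 1 := Or.inr hge
        have he : extP h σ ⟨(j : ℕ) + 1, hj1⟩ = ⟨(j : ℕ) + 1, hj1⟩ :=
          extP_apply_ge h σ _ (by simpa using hge)
        have hlt := extP_lt h σ j hjlt
        rw [he] at h2
        have := Fin.lt_def.mp h2
        simp at this
        omega
      · -- j ≥ m: π j = j < j+1 = π (j+1)
        have he1 : extP h σ j = j := extP_apply_ge h σ j hjge
        have he2 : extP h σ ⟨(j : ℕ) + 1, hj1⟩ = ⟨(j : ℕ) + 1, hj1⟩ :=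
          extP_apply_ge h σ _ (by simp; omega)
        rw [he1, he2] at h2
        have := Fin.lt_def.mp h2
        simp at this
    have him : (i : ℕ) < m := by
      have := Fin.lt_def.mp hij; omega
    have hjm' : (j : ℕ) < m := by omega
    refine ⟨⟨i, him⟩, ⟨j, hjm'⟩, hjm, Fin.lt_def.mpr (Fin.lt_def.mp hij), ?_, ?_⟩
    · have e1 := extP_apply_lt h σ i him
      have e2 := extP_apply_lt h σ ⟨(j : ℕ) + 1, hj1⟩ (by simpa using hjm)
      have := Fin.lt_def.mp h1
      rw [e1] at this
      rw [e2] at this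
      exact Fin.lt_def.mpr this
    · have e2 := extP_apply_lt h σ ⟨(j : ℕ) + 1, hj1⟩ (by simpa using hjm)
      have e3 := extP_apply_lt h σ j hjm'
      have := Fin.lt_def.mp h2
      rw [e2, e3] at this
      exact Fin.lt_def.mpr this
  · rintro ⟨i, j, hj1, hij, h1, h2⟩
    have hin : (i : ℕ) < n := lt_of_lt_of_le i.2 h
    have hjn : (j : ℕ) < n := lt_of_lt_of_le j.2 h
    have hj1n : (j : ℕ) + 1 < n := lt_of_lt_of_le hj1 h
    refine ⟨⟨i, hin⟩, ⟨j, hjn⟩, hj1n, Fin.lt_def.mpr (Fin.lt_def.mp hij), ?_, ?_⟩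
    · have e1 := extP_apply_lt h σ ⟨(i : ℕ), hin⟩ i.2
      have e2 := extP_apply_lt h σ ⟨(j : ℕ) + 1, hj1n⟩ hj1
      apply Fin.lt_def.mpr
      rw [e1, e2]
      have := Fin.lt_def.mp h1
      simpa using this
    · have e2 := extP_apply_lt h σ ⟨(j : ℕ) + 1, hj1n⟩ hj1
      have e3 := extP_apply_lt h σ ⟨(j : ℕ), hjn⟩ j.2
      apply Fin.lt_def.mpr
      rw [e2, e3]
      have := Fin.lt_def.mp h2
      simpa using this

/-- Inversion count is preserved by `extP`. -/
lemma invCount_extP (h : m ≤ n) (σ : Equiv.Perm (Fin m)) :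
    invCount (extP h σ) = invCount σ := by
  unfold invCount
  symm
  apply Finset.card_bij (fun (p : Fin m × Fin m) _ =>
    ((⟨(p.1 : ℕ), lt_of_lt_of_le p.1.2 h⟩ : Fin n), (⟨(p.2 : ℕ), lt_of_lt_of_le p.2.2 h⟩ : Fin n)))
  · rintro ⟨a, b⟩ hp
    simp only [Finset.mem_filter, Finset.mem_univ, true_and] at hp ⊢
    obtain ⟨hab, hinv⟩ := hp
    constructor
    · exact Fin.lt_def.mpr (Fin.lt_def.mp hab)
    · have e1 := extP_apply_lt h σ ⟨(a : ℕ), lt_of_lt_of_le a.2 h⟩ a.2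
      have e2 := extP_apply_lt h σ ⟨(b : ℕ), lt_of_lt_of_le b.2 h⟩ b.2
      apply Fin.lt_def.mpr
      rw [e1, e2]
      have := Fin.lt_def.mp hinv
      simpa using this
  · rintro ⟨a1, b1⟩ h1 ⟨a2, b2⟩ h2 heq
    simp only [Prod.mk.injEq, Fin.mk.injEq] at heq
    ext
    · exact heq.1
    · exact heq.2
  · rintro ⟨a, b⟩ hp
    simp only [Finset.mem_filter, Finset.mem_univ, true_and] at hp
    obtain ⟨hab, hinv⟩ := hp
    -- b must satisfy π b < π a; show both a b < m
    have hbm : (b : ℕ) < m := by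
      by_contra hge
      push_neg at hge
      have heb : extP h σ b = b := extP_apply_ge h σ b hge
      rw [heb] at hinv
      rcases lt_or_ge (a : ℕ) m with ha | ha
      · have := extP_lt h σ a ha
        have := Fin.lt_def.mp hinv
        omega
      · have hea : extP h σ a = a := extP_apply_ge h σ a ha
        rw [hea] at hinv
        exact absurd hinv (not_lt.mpr (le_of_lt hab))
    have ham : (a : ℕ) < m := lt_trans (Fin.lt_def.mp hab) hbm
    refine ⟨(⟨(a : ℕ), ham⟩, ⟨(b : ℕ), hbm⟩), ?_, ?_⟩
    · simp only [Finset.mem_filter, Finset.mem_univ, true_and]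
      constructor
      · exact Fin.lt_def.mpr (Fin.lt_def.mp hab)
      · have e1 := extP_apply_lt h σ a ham
        have e2 := extP_apply_lt h σ b hbm
        apply Fin.lt_def.mpr
        have := Fin.lt_def.mp hinv
        rw [e1, e2] at this
        simpa using this
    · simp

end Aux

/-- If a `1-32`-avoiding permutation of length `n` has `k` inversions and `n ≥ k+2`,
then `π_j = j` for all positions `j ≥ k+2` (1-based; `0`-based: `j ≥ k+1`); hence the
number `f(n,k)` of such permutations satisfies `f(n,k) = f(k+1,k)` for `n ≥ k+1`. -/
theorem stmt15 :
    (∀ (n k : ℕ) (π : Equiv.Perm (Fin n)), ¬ Contains1d32 π → invCount π = k →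
      k + 2 ≤ n → ∀ j : Fin n, k + 1 ≤ (j : ℕ) → π j = j) ∧
    (∀ n k : ℕ, k + 1 ≤ n → fCount n k = fCount (k + 1) k) := by
  constructor
  · intro n k π hav hk _ j hj
    exact fix_of_avoid π hav hk j hj
  · intro n k hkn
    unfold fCount
    symm
    apply Nat.card_congr
    apply Equiv.ofBijective
      (f := fun σp : {π : Equiv.Perm (Fin (k + 1)) // ¬ Contains1d32 π ∧ invCount π = k} =>
        (⟨extP hkn σp.1, by
          rw [contains_extP_iff]
          rw [invCount_extP]
          exact σp.2⟩ :
          {π : Equiv.Perm (Fin n) // ¬ Contains1d32 π ∧ invCount π = k}))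
    constructor
    · rintro ⟨σ1, h1⟩ ⟨σ2, h2⟩ heq
      simp only [Subtype.mk.injEq] at heq
      apply Subtype.ext
      apply Equiv.ext
      intro x
      have := Equiv.ext_iff.mp heq ⟨(x : ℕ), lt_of_lt_of_le x.2 hkn⟩
      have e1 := extP_apply_lt hkn σ1 ⟨(x : ℕ), lt_of_lt_of_le x.2 hkn⟩ x.2
      have e2 := extP_apply_lt hkn σ2 ⟨(x : ℕ), lt_of_lt_of_le x.2 hkn⟩ x.2
      apply Fin.ext
      have hv : ((extP hkn σ1 ⟨(x : ℕ), lt_of_lt_of_le x.2 hkn⟩ : Fin n) : ℕ)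
          = ((extP hkn σ2 ⟨(x : ℕ), lt_of_lt_of_le x.2 hkn⟩ : Fin n) : ℕ) := by rw [this]
      rw [e1, e2] at hv
      simpa using hv
    · rintro ⟨π, hπ⟩
      have hfix : ∀ l : Fin n, k + 1 ≤ (l : ℕ) → π l = l := fix_of_avoid π hπ.1 hπ.2
      have hbd : ∀ l : Fin n, (l : ℕ) < k + 1 → (π l : ℕ) < k + 1 :=
        prefix_closed π hfix
      -- restriction of π to Fin (k+1)
      let g : Fin (k + 1) → Fin (k + 1) := fun x =>
        ⟨(π ⟨(x : ℕ), lt_of_lt_of_le x.2 hkn⟩ : ℕ), hbd _ x.2⟩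
      have hginj : Function.Injective g := by
        intro x y hxy
        simp only [g, Fin.mk.injEq] at hxy
        have : π ⟨(x : ℕ), lt_of_lt_of_le x.2 hkn⟩ = π ⟨(y : ℕ), lt_of_lt_of_le y.2 hkn⟩ :=
          Fin.ext hxy
        have := π.injective this
        exact Fin.ext (by simpa using congrArg (fun z : Fin n => (z : ℕ)) this)
      have hgbij : Function.Bijective g := Finite.injective_iff_bijective.mp hginj
      let σ : Equiv.Perm (Fin (k + 1)) := Equiv.ofBijective g hgbij
      have hext : extP hkn σ = π := by
        apply Equiv.ext
        intro x
        by_cases hx : (x : ℕ) < k + 1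
        · apply Fin.ext
          rw [extP_apply_lt hkn σ x hx]
          show ((g ⟨(x : ℕ), hx⟩ : Fin (k + 1)) : ℕ) = _
          simp only [g]
        · push_neg at hx
          rw [extP_apply_ge hkn σ x hx, hfix x hx]
      refine ⟨⟨σ, ?_, ?_⟩, ?_⟩
      · rw [← contains_extP_iff hkn, hext]; exact hπ.1
      · rw [← invCount_extP hkn, hext]; exact hπ.2
      · apply Subtype.ext
        exact hext
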